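/- Let β be a probability measure on the closed unit ball B₁(0) ⊂ ℝ^d of norm ‖·‖, let g ∈ ℝ^d, and let φ be convex lsc with φ(1)=0, φ(x)=∞ for x<0, satisfying either lim_{t→∞}φ(t)/t<∞ or (lim_{t→∞}φ(t)/t=∞ and dom φ = ℝ_+), with supp β = B₁(0). Then as C → ∞, inf over μ ∈ ℝ of { μ + (1/C)·E_{b∼β}[ φ^*( C·(gᵀb − μ) ) ] } converges to sup_{b ∈ B₁(0)} gᵀb = ‖g‖_*. -/

import Mathlib

open MeasureTheory Filter
open scoped Classical ENNReal

/-- Affine minorant of a convex function with `φ 1 = 0`. -/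
lemma stmt14_minorant {φ : ℝ → ℝ} (hconv : ConvexOn ℝ (Set.Ici 0) φ) (hφ1 : φ 1 = 0) :
    ∃ m c : ℝ, 0 ≤ c ∧ ∀ s : ℝ, 0 ≤ s → m * (s - 1) - c ≤ φ s := by
  refine ⟨-2 * φ (1/2), |(-2 : ℝ) * φ (1/2)| + |φ 2|, by positivity, ?_⟩
  intro s hs
  set m : ℝ := -2 * φ (1/2) with hm
  rcases lt_trichotomy s 1 with h1 | h1 | h1
  · -- s < 1 : slope(s,1) ≤ slope(1,2), so φ s ≥ φ 2 * (s - 1)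
    have hsl := hconv.slope_mono_adjacent (x := s) (y := 1) (z := 2) hs
      (by norm_num) h1 (by norm_num)
    rw [hφ1] at hsl
    -- hsl : (0 - φ s)/(1 - s) ≤ (φ 2 - 0)/(2 - 1)
    have h1s : (0:ℝ) < 1 - s := by linarith
    have : -φ s ≤ φ 2 * (1 - s) := by
      have := (div_le_iff₀ h1s).mp (by simpa using hsl)
      linarith [this]
    have hb1 : -|φ 2| ≤ φ s := by
      have habs : φ 2 * (1 - s) ≤ |φ 2| := by
        have : |φ 2 * (1 - s)| ≤ |φ 2| * 1 := by
          rw [abs_mul]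
          gcongr
          rw [abs_of_pos h1s]; linarith
        calc φ 2 * (1 - s) ≤ |φ 2 * (1 - s)| := le_abs_self _
          _ ≤ |φ 2| := by linarith
      linarith
    have hb2 : m * (s - 1) ≤ |m| := by
      calc m * (s - 1) ≤ |m * (s - 1)| := le_abs_self _
        _ ≤ |m| * 1 := by
            rw [abs_mul]
            gcongr
            rw [abs_sub_comm, abs_of_pos h1s]; linarith
        _ = |m| := mul_one _
    linarith
  · subst h1
    rw [hφ1]
    have h0 : (0:ℝ) ≤ |m| + |φ 2| := by positivity
    nlinarith
  · -- 1 < s : slope(1/2,1) ≤ slope(1,s), so φ s ≥ m * (s-1)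
    have hsl := hconv.slope_mono_adjacent (x := (1/2:ℝ)) (y := 1) (z := s)
      (by norm_num) (le_trans (by norm_num : (0:ℝ) ≤ 1) h1.le) (by norm_num) h1
    rw [hφ1] at hsl
    have hs1 : (0:ℝ) < s - 1 := by linarith
    have hm' : m ≤ (φ s - 0) / (s - 1) := by
      have : (0 - φ (1/2)) / (1 - 1/2) = m := by rw [hm]; ring
      linarith [hsl, this.symm.le, this.le]
    have := (le_div_iff₀ hs1).mp hm'
    have hc : (0:ℝ) ≤ |m| + |φ 2| := by positivity
    linarith


set_option maxHeartbeats 1000000 in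
/-- OCE regularizer converging to the dual-norm (variation) regularizer.
`β` is a probability measure whose support is the closed unit ball (a.e. `‖b‖ ≤ 1`, and
every ball around a point of the unit ball has positive measure), `g` a linear functional
(so `gᵀb = g b` and `‖g‖` is the dual norm `sup_{‖b‖≤1} g b`), and `φ` a divergence
function (convex lsc, `φ(1)=0`, `+∞` on negatives via the conjugate sup over `s ≥ 0`)
satisfying the growth condition.  Then as `C → ∞`,
`inf_μ { μ + (1/C)·E_β[φ^*(C(g b − μ))] } → ‖g‖`, where the objective is extended-real
(`+∞` unless the conjugate term is a.e. finite and integrable). -/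
theorem stmt14 {E : Type*} [NormedAddCommGroup E] [NormedSpace ℝ E] [MeasurableSpace E]
    [BorelSpace E]
    (β : Measure E) [IsProbabilityMeasure β]
    (hae : ∀ᵐ b ∂β, ‖b‖ ≤ 1)
    (hsupp : ∀ b : E, ‖b‖ ≤ 1 → ∀ ε : ℝ, 0 < ε → 0 < β {x | ‖x - b‖ < ε})
    (g : E →L[ℝ] ℝ)
    (φ : ℝ → ℝ) (hconv : ConvexOn ℝ (Set.Ici 0) φ)
    (hlsc : LowerSemicontinuousOn φ (Set.Ici 0)) (hφ1 : φ 1 = 0)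
    (hgrowth : (∃ C₀ : ℝ, Tendsto (fun t => φ t / t) atTop (nhds C₀)) ∨
      Tendsto (fun t => φ t / t) atTop atTop)
    (conjE : ℝ → EReal)
    (hconjE : ∀ t : ℝ, conjE t = ⨆ s : {s : ℝ // 0 ≤ s}, ((t * s.1 - φ s.1 : ℝ) : EReal))
    (Obj : ℝ → ℝ → EReal)
    (hObj : ∀ C μ : ℝ, Obj C μ =
      if (∀ᵐ b ∂β, conjE (C * (g b - μ)) ≠ ⊤) ∧
          Integrable (fun b => (conjE (C * (g b - μ))).toReal) β
        then ((μ + (1 / C) * ∫ b, (conjE (C * (g b - μ))).toReal ∂β : ℝ) : EReal) else ⊤) :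
    Tendsto (fun C : ℝ => ⨅ μ : ℝ, Obj C μ) atTop (nhds ((‖g‖ : ℝ) : EReal)) := by
  obtain ⟨m, c, hc, hmin⟩ := stmt14_minorant hconv hφ1
  -- basic facts about conjE
  have hge : ∀ t s : ℝ, 0 ≤ s → ((t * s - φ s : ℝ) : EReal) ≤ conjE t := by
    intro t s hs
    rw [hconjE]
    exact le_iSup (fun u : {u : ℝ // 0 ≤ u} => ((t * u.1 - φ u.1 : ℝ) : EReal)) ⟨s, hs⟩
  have hget : ∀ t : ℝ, (t : EReal) ≤ conjE t := by
    intro t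
    have := hge t 1 zero_le_one
    simpa [hφ1] using this
  have hle : ∀ t : ℝ, t ≤ m → conjE t ≤ ((m + c : ℝ) : EReal) := by
    intro t ht
    rw [hconjE]
    apply iSup_le
    rintro ⟨s, hs⟩
    refine EReal.coe_le_coe_iff.2 ?_
    have h1 := hmin s hs
    nlinarith [mul_nonneg (sub_nonneg.2 ht) hs]
  have hmono : Monotone conjE := by
    intro t t' h
    rw [hconjE, hconjE]
    apply iSup_mono
    rintro ⟨s, hs⟩
    refine EReal.coe_le_coe_iff.2 ?_
    nlinarith [mul_nonneg (sub_nonneg.2 h) hs]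
  have hmeasC : Measurable conjE := hmono.measurable
  have haeg : ∀ᵐ b ∂β, |g b| ≤ ‖g‖ := by
    filter_upwards [hae] with b hb
    calc |g b| = ‖g b‖ := (Real.norm_eq_abs _).symm
      _ ≤ ‖g‖ * ‖b‖ := g.le_opNorm b
      _ ≤ ‖g‖ * 1 := mul_le_mul_of_nonneg_left hb (norm_nonneg g)
      _ = ‖g‖ := mul_one _
  have hintg : Integrable (fun b => g b) β := by
    refine Integrable.mono' (integrable_const ‖g‖) g.continuous.aestronglyMeasurable ?_
    filter_upwards [haeg] with b hb
    simpa [Real.norm_eq_abs] using hb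
  rw [tendsto_order]
  constructor
  · -- lower bound
    intro a ha
    obtain ⟨r, har, hrK⟩ := EReal.exists_between_coe_real ha
    have hrK' : r < ‖g‖ := EReal.coe_lt_coe_iff.1 hrK
    set ε : ℝ := (‖g‖ - r) / 2 with hεdef
    have hε : 0 < ε := by simp only [hεdef]; linarith
    set a₀ : ℝ := ‖g‖ - ε with ha₀def
    have hra₀ : r < a₀ := by simp only [ha₀def, hεdef]; linarith
    -- find a point of the ball where g is close to ‖g‖
    have hb₀ : ∃ b₀ : E, ‖b₀‖ ≤ 1 ∧ ‖g‖ - ε / 2 < g b₀ := by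
      obtain ⟨x, hx1, hx2⟩ := g.exists_lt_apply_of_lt_opNorm
        (show ‖g‖ - ε / 2 < ‖g‖ by linarith)
      rw [Real.norm_eq_abs] at hx2
      rcases le_or_gt 0 (g x) with hgx | hgx
      · exact ⟨x, hx1.le, by rwa [abs_of_nonneg hgx] at hx2⟩
      · refine ⟨-x, by simpa using hx1.le, ?_⟩
        rw [map_neg]
        rwa [abs_of_neg hgx] at hx2
    obtain ⟨b₀, hb₀1, hb₀2⟩ := hb₀
    set ρ : ℝ := ε / (2 * (‖g‖ + 1)) with hρdef
    have hρ : 0 < ρ := by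
      apply div_pos hε
      positivity
    have hball : ∀ x : E, ‖x - b₀‖ < ρ → a₀ < g x := by
      intro x hx
      have h1 : |g x - g b₀| ≤ ‖g‖ * ρ := by
        have : g x - g b₀ = g (x - b₀) := by rw [map_sub]
        rw [this, ← Real.norm_eq_abs]
        calc ‖g (x - b₀)‖ ≤ ‖g‖ * ‖x - b₀‖ := g.le_opNorm _
          _ ≤ ‖g‖ * ρ := mul_le_mul_of_nonneg_left hx.le (norm_nonneg g)
      have h2 : ‖g‖ * ρ ≤ ε / 2 := by
        rw [hρdef, mul_div_assoc']
        rw [div_le_div_iff₀ (by positivity) (by norm_num : (0:ℝ) < 2)]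
        nlinarith [norm_nonneg g, hε.le]
      have := abs_le.1 h1
      simp only [ha₀def]
      linarith [this.1]
    set A : Set E := {x : E | a₀ < g x} with hAdef
    have hAmeas : MeasurableSet A := measurableSet_lt measurable_const g.continuous.measurable
    have hApos : 0 < β A := by
      refine lt_of_lt_of_le (hsupp b₀ hb₀1 ρ hρ) (measure_mono ?_)
      intro x hx
      exact hball x hx
    set p : ℝ := (β A).toReal with hpdef
    have hp0 : 0 < p := ENNReal.toReal_pos hApos.ne' (measure_ne_top β A)
    have hp1 : p ≤ 1 := by
      rw [hpdef]
      have : β A ≤ 1 := prob_le_one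
      calc (β A).toReal ≤ (1 : ℝ≥0∞).toReal := ENNReal.toReal_mono ENNReal.one_ne_top this
        _ = 1 := by simp
    set s : ℝ := p⁻¹ with hsdef
    have hs0 : 0 ≤ s := by positivity
    have hps : p * s = 1 := mul_inv_cancel₀ hp0.ne'
    set D : ℝ := p * φ s + (1 - p) * φ 0 with hDdef
    have hev : ∀ᶠ C in atTop, ∀ μ : ℝ, (r : EReal) ≤ Obj C μ := by
      filter_upwards [eventually_ge_atTop (max 1 (|D| / (a₀ - r) + 1))] with C hC
      have hC1 : (1 : ℝ) ≤ C := le_trans (le_max_left _ _) hC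
      have hC0 : (0 : ℝ) < C := lt_of_lt_of_le one_pos hC1
      have hDC : D / C < a₀ - r := by
        have h1 : |D| / (a₀ - r) + 1 ≤ C := le_trans (le_max_right _ _) hC
        have h2 : 0 < a₀ - r := by linarith
        rw [div_lt_iff₀ hC0]
        have h3 : |D| < C * (a₀ - r) := by
          have := (div_le_iff₀ h2).1 (by linarith : |D| / (a₀ - r) ≤ C - 1)
          nlinarith
        calc D ≤ |D| := le_abs_self _
          _ < C * (a₀ - r) := h3
          _ = (a₀ - r) * C := mul_comm _ _
      intro μ
      rw [hObj]
      split_ifs with h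
      swap
      · exact le_top
      obtain ⟨hne, hint⟩ := h
      set f : E → ℝ := fun b => (conjE (C * (g b - μ))).toReal with hfdef
      set ψ : E → ℝ := fun b => (s * C) * g b + (φ 0 - φ s - s * C * μ) with hψdef
      set h₀ : E → ℝ := fun b => Set.indicator A ψ b - φ 0 with hh₀def
      have hψmeas : Measurable ψ :=
        (g.continuous.measurable.const_mul (s * C)).add measurable_const
      have hh₀meas : Measurable h₀ := (hψmeas.indicator hAmeas).sub measurable_const
      -- pointwise bound
      have hpt : ∀ᵐ b ∂β, h₀ b ≤ f b := by
        filter_upwards [hne] with b hb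
        by_cases hbA : b ∈ A
        · have h3 := hge (C * (g b - μ)) s hs0
          have h4 := EReal.toReal_le_toReal h3 (EReal.coe_ne_bot _) hb
          rw [EReal.toReal_coe] at h4
          simp only [hh₀def, Set.indicator_of_mem hbA, hψdef, hfdef]
          have : (s * C) * g b + (φ 0 - φ s - s * C * μ) - φ 0
              = C * (g b - μ) * s - φ s := by ring
          rw [this]
          exact h4
        · have h3 := hge (C * (g b - μ)) 0 le_rfl
          have h4 := EReal.toReal_le_toReal h3 (EReal.coe_ne_bot _) hb
          rw [EReal.toReal_coe] at h4
          simp only [hh₀def, Set.indicator_of_notMem hbA, hfdef]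
          have : C * (g b - μ) * 0 - φ 0 = 0 - φ 0 := by ring
          rw [this] at h4
          linarith
      -- integrability of the indicator part
      have hub : ∀ᵐ b ∂β, |Set.indicator A ψ b| ≤ (s * C) * ‖g‖ + |φ 0 - φ s - s * C * μ| := by
        filter_upwards [haeg] with b hb
        have hsc : (0:ℝ) ≤ s * C := by positivity
        by_cases hbA : b ∈ A
        · rw [Set.indicator_of_mem hbA]
          calc |ψ b| ≤ |(s * C) * g b| + |φ 0 - φ s - s * C * μ| := abs_add_le _ _
            _ ≤ (s * C) * ‖g‖ + |φ 0 - φ s - s * C * μ| := by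
                rw [abs_mul, abs_of_nonneg hsc]
                have : (s*C) * |g b| ≤ (s*C) * ‖g‖ := mul_le_mul_of_nonneg_left hb hsc
                linarith
        · rw [Set.indicator_of_notMem hbA]
          simp only [abs_zero]
          positivity
      have hψint : Integrable (fun b => Set.indicator A ψ b) β := by
        refine Integrable.mono' (integrable_const ((s * C) * ‖g‖ + |φ 0 - φ s - s * C * μ|))
          (hψmeas.indicator hAmeas).aestronglyMeasurable ?_
        filter_upwards [hub] with b hb
        rwa [Real.norm_eq_abs]
      have hh₀int : Integrable h₀ β := hψint.sub (integrable_const (φ 0))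
      have hmono_int : ∫ b, h₀ b ∂β ≤ ∫ b, f b ∂β := integral_mono_ae hh₀int hint hpt
      -- compute ∫ h₀
      have hIA : IntegrableOn (fun b => g b) A β := hintg.integrableOn
      have hI : a₀ * p ≤ ∫ b in A, g b ∂β := by
        have h5 := setIntegral_mono_on (integrableOn_const (measure_ne_top β A) enorm_ne_top)
          hIA hAmeas (fun x hx => (le_of_lt hx : a₀ ≤ g x))
        rwa [setIntegral_const, smul_eq_mul, mul_comm] at h5
      have hcomp : ∫ b, h₀ b ∂β
          = (s * C) * (∫ b in A, g b ∂β) + (φ 0 - φ s - s * C * μ) * p - φ 0 := by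
        have e2 : ∫ b in A, ψ b ∂β
            = (s * C) * (∫ b in A, g b ∂β) + (φ 0 - φ s - s * C * μ) * p := by
          simp only [hψdef]
          rw [integral_add (hIA.const_mul (s * C))
            (integrableOn_const (measure_ne_top β A) enorm_ne_top)]
          rw [integral_const_mul, setIntegral_const, smul_eq_mul]
          rw [hpdef]; simp only [Measure.real]
          ring
        calc ∫ b, h₀ b ∂β
            = (∫ b, Set.indicator A ψ b ∂β) - ∫ _b, (φ 0 : ℝ) ∂β :=
              integral_sub hψint (integrable_const (φ 0))
          _ = (∫ b in A, ψ b ∂β) - φ 0 := by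
              rw [integral_indicator hAmeas, integral_const]
              simp [measure_univ]
          _ = (s * C) * (∫ b in A, g b ∂β) + (φ 0 - φ s - s * C * μ) * p - φ 0 := by
              rw [e2]
      -- final arithmetic
      refine EReal.coe_le_coe_iff.2 ?_
      have hfin : r ≤ μ + 1 / C * ∫ b, f b ∂β := by
        have h6 : (s * C) * (a₀ * p) + (φ 0 - φ s - s * C * μ) * p - φ 0 ≤ ∫ b, h₀ b ∂β := by
          rw [hcomp]
          have := mul_le_mul_of_nonneg_left hI (by positivity : (0:ℝ) ≤ s * C)
          linarith
        have hC0' : C ≠ 0 := ne_of_gt hC0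
        have e3 : s * C * (a₀ * p) = a₀ * C := by linear_combination (a₀ * C) * hps
        have e4 : s * C * μ * p = μ * C := by linear_combination (μ * C) * hps
        have einner : (s * C) * (a₀ * p) + (φ 0 - φ s - s * C * μ) * p - φ 0
            = a₀ * C + (φ 0 - φ s) * p - μ * C - φ 0 := by linear_combination e3 - e4
        have h7 : μ + 1 / C * ((s * C) * (a₀ * p) + (φ 0 - φ s - s * C * μ) * p - φ 0)
            = a₀ - D / C := by
          rw [einner, hDdef]
          field_simp
          ring
        have hTineq : (s * C) * (a₀ * p) + (φ 0 - φ s - s * C * μ) * p - φ 0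
            ≤ ∫ b, f b ∂β := le_trans h6 hmono_int
        have h8 : μ + 1 / C * ((s * C) * (a₀ * p) + (φ 0 - φ s - s * C * μ) * p - φ 0)
            ≤ μ + 1 / C * ∫ b, f b ∂β := by
          have h81 := mul_le_mul_of_nonneg_left hTineq
            (le_of_lt (by positivity : (0:ℝ) < 1 / C))
          linarith
        rw [h7] at h8
        linarith
      exact hfin
    filter_upwards [hev] with C hC
    exact lt_of_lt_of_le har (le_iInf hC)
  · -- upper bound
    intro y hy
    obtain ⟨r, hKr, hrb⟩ := EReal.exists_between_coe_real hy
    have hKr' : ‖g‖ < r := EReal.coe_lt_coe_iff.1 hKr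
    set ε : ℝ := (r - ‖g‖) / 2 with hεdef
    have hε : 0 < ε := by simp only [hεdef]; linarith
    set μ₀ : ℝ := ‖g‖ + ε with hμ₀def
    filter_upwards [eventually_ge_atTop (max 1 ((|m| + |m + c|) / ε + 1))] with C hC
    have hC1 : (1:ℝ) ≤ C := le_trans (le_max_left _ _) hC
    have hC0 : (0:ℝ) < C := lt_of_lt_of_le one_pos hC1
    have hCε : |m| + |m + c| < C * ε := by
      have h1 : (|m| + |m + c|) / ε + 1 ≤ C := le_trans (le_max_right _ _) hC
      have := (div_le_iff₀ hε).1 (by linarith : (|m| + |m + c|) / ε ≤ C - 1)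
      nlinarith
    have haet : ∀ᵐ b ∂β, C * (g b - μ₀) ≤ m := by
      filter_upwards [haeg] with b hb
      have h1 : g b - μ₀ ≤ -ε := by
        have := (abs_le.1 hb).2
        simp only [hμ₀def]; linarith
      have h2 : C * (g b - μ₀) ≤ C * (-ε) := mul_le_mul_of_nonneg_left h1 hC0.le
      have h3 : -(C * ε) ≤ m := by
        have : |m| ≤ C * ε := by nlinarith [abs_nonneg (m + c)]
        linarith [neg_abs_le m]
      linarith [h2, h3]
    have h1 : ∀ᵐ b ∂β, conjE (C * (g b - μ₀)) ≤ ((m + c : ℝ) : EReal) := by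
      filter_upwards [haet] with b hb
      exact hle _ hb
    have hne : ∀ᵐ b ∂β, conjE (C * (g b - μ₀)) ≠ ⊤ := by
      filter_upwards [h1] with b hb
      exact ne_top_of_le_ne_top (EReal.coe_ne_top _) hb
    set f : E → ℝ := fun b => (conjE (C * (g b - μ₀))).toReal with hfdef
    have hfub : ∀ᵐ b ∂β, f b ≤ m + c := by
      filter_upwards [h1] with b hb
      have hnb : conjE (C * (g b - μ₀)) ≠ ⊥ := by
        intro hbot
        have := hget (C * (g b - μ₀))
        rw [hbot] at this
        exact (EReal.coe_ne_bot _) (le_bot_iff.1 this)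
      have := EReal.toReal_le_toReal hb hnb (EReal.coe_ne_top _)
      rwa [EReal.toReal_coe] at this
    have hflb : ∀ᵐ b ∂β, C * (g b - μ₀) ≤ f b := by
      filter_upwards [hne] with b hb
      have := EReal.toReal_le_toReal (hget (C * (g b - μ₀))) (EReal.coe_ne_bot _) hb
      rwa [EReal.toReal_coe] at this
    have hmeasf : Measurable f :=
      measurable_ereal_toReal.comp
        (hmeasC.comp ((g.continuous.measurable.sub measurable_const).const_mul C))
    have hint : Integrable f β := by
      refine Integrable.mono' (integrable_const (|m + c| + C * (‖g‖ + |μ₀|)))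
        hmeasf.aestronglyMeasurable ?_
      filter_upwards [hfub, hflb, haeg] with b hub hlb hb
      rw [Real.norm_eq_abs, abs_le]
      constructor
      · have h2 : -(‖g‖ + |μ₀|) ≤ g b - μ₀ := by
          have ha1 := (abs_le.1 hb).1
          have ha2 : μ₀ ≤ |μ₀| := le_abs_self _
          linarith
        have h3 : C * (-(‖g‖ + |μ₀|)) ≤ C * (g b - μ₀) := mul_le_mul_of_nonneg_left h2 hC0.le
        have h4 : (0:ℝ) ≤ |m + c| := abs_nonneg _
        have h5 : C * (-(‖g‖ + |μ₀|)) = -(C * (‖g‖ + |μ₀|)) := by ring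
        linarith
      · have : m + c ≤ |m + c| := le_abs_self _
        have h4 : (0:ℝ) ≤ C * (‖g‖ + |μ₀|) := by positivity
        linarith
    have hintub : ∫ b, f b ∂β ≤ m + c := by
      have := integral_mono_ae hint (integrable_const (m + c)) hfub
      simpa using this
    have hobj : Obj C μ₀ = ((μ₀ + 1 / C * ∫ b, f b ∂β : ℝ) : EReal) := by
      rw [hObj]
      rw [if_pos ⟨hne, hint⟩]
    have hlt : μ₀ + 1 / C * ∫ b, f b ∂β < r := by
      have h0 : (0:ℝ) ≤ 1 / C := by positivity
      have h2 : 1 / C * ∫ b, f b ∂β ≤ 1 / C * (m + c) :=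
        mul_le_mul_of_nonneg_left hintub h0
      have h3 : 1 / C * (m + c) < ε := by
        rw [div_mul_eq_mul_div, one_mul, div_lt_iff₀ hC0]
        have h4 : m + c ≤ |m + c| := le_abs_self _
        nlinarith [abs_nonneg m, hCε]
      have h5 : μ₀ + ε ≤ r := by
        rw [hμ₀def]
        linarith [hεdef]
      linarith
    calc (⨅ μ : ℝ, Obj C μ) ≤ Obj C μ₀ := iInf_le _ _
      _ = ((μ₀ + 1 / C * ∫ b, f b ∂β : ℝ) : EReal) := hobj
      _ < (r : EReal) := EReal.coe_lt_coe_iff.2 hlt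
      _ < y := hrb
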